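/- Let G be a graph with a subtree model (T, S), let P be a path in G with endpoints u and v, and let x_u ∈ S_u and x_v ∈ S_v be arbitrary nodes. Then for every node x on the path in T from x_u to x_v, the cover V(x) contains at least one vertex of P. -/

import Mathlib

open SimpleGraph

/-- A subtree model of `G` on a tree `T`: each vertex gets a nonempty connected
subtree, and subtrees of distinct vertices intersect iff the vertices are adjacent. -/
def IsSubtreeModel {V W : Type*} (G : SimpleGraph V) (T : SimpleGraph W) (S : V → Set W) : Prop :=
  T.IsTree ∧ (∀ v : V, (T.induce (S v)).Connected) ∧
    ∀ u v : V, u ≠ v → ((S u ∩ S v).Nonempty ↔ G.Adj u v)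

lemma walk_in_set {W : Type*} (T : SimpleGraph W) (s : Set W)
    (hconn : (T.induce s).Connected) {a b : W} (ha : a ∈ s) (hb : b ∈ s) :
    ∃ p : T.Walk a b, ∀ x ∈ p.support, x ∈ s := by
  obtain ⟨p0⟩ := hconn ⟨a, ha⟩ ⟨b, hb⟩
  refine ⟨p0.map (SimpleGraph.Embedding.induce s).toHom, ?_⟩
  intro x hx
  replace hx : x ∈ (p0.map (SimpleGraph.Embedding.induce s).toHom).support := hx
  rw [SimpleGraph.Walk.support_map, List.mem_map] at hx
  obtain ⟨⟨y, hy⟩, _, rfl⟩ := hx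
  exact hy

lemma exists_walk_covered {V W : Type*} (G : SimpleGraph V)
    (T : SimpleGraph W) (S : V → Set W) (h : IsSubtreeModel G T S) :
    ∀ {u v : V} (P : G.Walk u v) (xu xv : W), xu ∈ S u → xv ∈ S v →
      ∃ p : T.Walk xu xv, ∀ x ∈ p.support, ∃ w ∈ P.support, x ∈ S w := by
  intro u v P
  induction P with
  | nil =>
    rename_i a
    intro xu xv hxu hxv
    obtain ⟨p, hp⟩ := walk_in_set T _ (h.2.1 a) hxu hxv
    exact ⟨p, fun x hx => ⟨a, by simp, hp x hx⟩⟩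
  | cons hadj P' ih =>
    rename_i a b c
    intro xu xv hxu hxv
    obtain ⟨y, hya, hyb⟩ := (h.2.2 a b hadj.ne).mpr hadj
    obtain ⟨p1, hp1⟩ := walk_in_set T _ (h.2.1 a) hxu hya
    obtain ⟨p2, hp2⟩ := ih y xv hyb hxv
    refine ⟨p1.append p2, ?_⟩
    intro x hx
    rcases (SimpleGraph.Walk.mem_support_append_iff _ _).mp hx with hx | hx
    · exact ⟨a, by simp, hp1 x hx⟩
    · obtain ⟨w, hw, hws⟩ := hp2 x hx
      exact ⟨w, by simp [hw], hws⟩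

/-- Let `P` be a path in `G` from `u` to `v`, and let `x_u ∈ S_u`, `x_v ∈ S_v`. Then every
node on the tree path from `x_u` to `x_v` has a vertex of `P` in its cover. -/
theorem path_cover_intersect {V W : Type*} [Fintype V] [Fintype W] (G : SimpleGraph V)
    (T : SimpleGraph W) (S : V → Set W) (h : IsSubtreeModel G T S)
    (u v : V) (P : G.Walk u v) (hP : P.IsPath)
    (xu xv : W) (hxu : xu ∈ S u) (hxv : xv ∈ S v)
    (q : T.Walk xu xv) (hq : q.IsPath) :
    ∀ x ∈ q.support, ∃ w ∈ P.support, x ∈ S w := by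
  classical
  obtain ⟨p, hp⟩ := exists_walk_covered G T S h P xu xv hxu hxv
  have huniq := h.1.2.path_unique ⟨q, hq⟩ p.toPath
  intro x hx
  have hx' : x ∈ p.support := by
    apply SimpleGraph.Walk.support_toPath_subset p
    have : (⟨q, hq⟩ : T.Path xu xv).1.support = (p.toPath : T.Walk xu xv).support := by
      rw [huniq]
    simpa [← this] using hx
  exact hp x hx'
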